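/- Let φ : [0,1] → ℝ be a convex function with ∫₀¹ |φ(x)|^p dx ≤ 1 for some p ≥ 1. Then there is a constant c depending only on p such that for every y ∈ (0,1), |φ(y)| ≤ c · max(y^(-1/p), (1-y)^(-1/p)). -/

import Mathlib

open MeasureTheory Set

private lemma convex_abs_bound (φ : ℝ → ℝ) (hφ : ConvexOn ℝ (Icc 0 1) φ) :
    ∃ C : ℝ, 0 ≤ C ∧ ∀ x ∈ Icc (0:ℝ) 1, |φ x| ≤ C := by
  refine ⟨|φ 0| + |φ 1| + 2 * |φ (1/2)|, by positivity, ?_⟩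
  have h0 : (0:ℝ) ∈ Icc (0:ℝ) 1 := by norm_num
  have h1 : (1:ℝ) ∈ Icc (0:ℝ) 1 := by norm_num
  have up : ∀ t ∈ Icc (0:ℝ) 1, φ t ≤ |φ 0| + |φ 1| := by
    intro t ht
    obtain ⟨ht0, ht1⟩ := ht
    have h := hφ.2 h0 h1 (by linarith : (0:ℝ) ≤ 1 - t) ht0 (by ring)
    have harg : (1 - t) • (0:ℝ) + t • (1:ℝ) = t := by simp
    rw [harg] at h
    have e0 : (1 - t) • φ 0 ≤ (1 - t) * |φ 0| :=
      mul_le_mul_of_nonneg_left (le_abs_self _) (by linarith)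
    have e1 : t • φ 1 ≤ t * |φ 1| := mul_le_mul_of_nonneg_left (le_abs_self _) ht0
    have e2 : (1 - t) * |φ 0| ≤ |φ 0| := by nlinarith [abs_nonneg (φ 0)]
    have e3 : t * |φ 1| ≤ |φ 1| := by nlinarith [abs_nonneg (φ 1)]
    simp only [smul_eq_mul] at h e0 e1
    linarith
  intro x hx
  obtain ⟨hx0, hx1⟩ := hx
  have hx' : (1 - x) ∈ Icc (0:ℝ) 1 := ⟨by linarith, by linarith⟩
  have hmid := hφ.2 (⟨hx0, hx1⟩ : x ∈ Icc (0:ℝ) 1) hx'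
    (by norm_num : (0:ℝ) ≤ 1/2) (by norm_num : (0:ℝ) ≤ 1/2) (by norm_num)
  have harg : (1/2 : ℝ) • x + (1/2 : ℝ) • (1 - x) = 1/2 := by
    simp only [smul_eq_mul]; ring
  rw [harg] at hmid
  simp only [smul_eq_mul] at hmid
  have hup := up x ⟨hx0, hx1⟩
  have hup' := up (1 - x) hx'
  have hlow : -(|φ 0| + |φ 1| + 2 * |φ (1/2)|) ≤ φ x := by
    have := neg_abs_le (φ (1/2))
    linarith
  exact abs_le.mpr ⟨hlow, by linarith [abs_nonneg (φ (1/2))]⟩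

private lemma integrable_abs_rpow (φ : ℝ → ℝ) (hφ : ConvexOn ℝ (Icc 0 1) φ)
    (p : ℝ) (hp : 1 ≤ p) : IntegrableOn (fun x => |φ x| ^ p) (Icc (0:ℝ) 1) := by
  obtain ⟨C, hC0, hC⟩ := convex_abs_bound φ hφ
  have hconv : ConvexOn ℝ (Ioo (0:ℝ) 1) φ := hφ.subset Ioo_subset_Icc_self (convex_Ioo 0 1)
  have hcont : ContinuousOn φ (Ioo (0:ℝ) 1) := hconv.continuousOn isOpen_Ioo
  have hcontg : ContinuousOn (fun x => |φ x| ^ p) (Ioo (0:ℝ) 1) :=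
    hcont.abs.rpow_const (fun x _ => Or.inr (by linarith))
  have hres : (volume : Measure ℝ).restrict (Icc (0:ℝ) 1)
      = volume.restrict (Ioo (0:ℝ) 1) :=
    (Measure.restrict_congr_set Ioo_ae_eq_Icc).symm
  have hmeas : AEStronglyMeasurable (fun x => |φ x| ^ p)
      ((volume : Measure ℝ).restrict (Icc (0:ℝ) 1)) := by
    rw [hres]
    exact hcontg.aestronglyMeasurable measurableSet_Ioo
  refine Integrable.mono' (g := fun _ => C ^ p)
    (integrableOn_const measure_Icc_lt_top.ne) hmeas ?_
  refine (ae_restrict_iff' measurableSet_Icc).2 (ae_of_all _ fun x hx => ?_)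
  rw [Real.norm_eq_abs, abs_of_nonneg (Real.rpow_nonneg (abs_nonneg _) p)]
  exact Real.rpow_le_rpow (abs_nonneg _) (hC x hx) (by linarith)

private lemma exists_point_le (g : ℝ → ℝ) (hg : IntegrableOn g (Icc (0:ℝ) 1))
    (hnn : ∀ x, 0 ≤ g x) (h1 : (∫ x in Icc (0:ℝ) 1, g x) ≤ 1)
    (a b B : ℝ) (hab : a < b) (hsub : Icc a b ⊆ Icc (0:ℝ) 1)
    (hB : 1 < B * (b - a)) : ∃ x ∈ Icc a b, g x ≤ B := by
  by_contra h
  push_neg at h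
  have hint : IntegrableOn g (Icc a b) := hg.mono_set hsub
  have h2 : B * (b - a) ≤ ∫ x in Icc a b, g x := by
    have := setIntegral_ge_of_const_le (μ := volume) (c := B) measurableSet_Icc
      (measure_Icc_lt_top).ne (fun x hx => (h x hx).le) hint
    simpa [Real.volume_Icc, ENNReal.toReal_ofReal (by linarith : (0:ℝ) ≤ b - a),
      max_eq_left (by linarith : (0:ℝ) ≤ b - a), mul_comm] using this
  have h3 : (∫ x in Icc a b, g x) ≤ ∫ x in Icc (0:ℝ) 1, g x :=
    setIntegral_mono_set hg (ae_of_all _ hnn) (HasSubset.Subset.eventuallyLE hsub)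
  linarith

set_option maxHeartbeats 1000000 in
/-- If `φ` is convex on `[0,1]` with `∫₀¹ |φ|^p ≤ 1` for some `p ≥ 1`, then there is a
constant `c` depending only on `p` with `|φ y| ≤ c * max (y^(-1/p)) ((1-y)^(-1/p))`
for every `y ∈ (0,1)`. -/
theorem stmt4 (p : ℝ) (hp : 1 ≤ p) :
    ∃ c : ℝ, 0 < c ∧ ∀ φ : ℝ → ℝ, ConvexOn ℝ (Icc 0 1) φ →
      (∫ x in Icc (0:ℝ) 1, |φ x| ^ p) ≤ 1 →
      ∀ y ∈ Ioo (0:ℝ) 1, |φ y| ≤ c * max (y ^ (-(1/p))) ((1 - y) ^ (-(1/p))) := by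
  have hp0 : 0 < p := by linarith
  refine ⟨128, by norm_num, ?_⟩
  intro φ hφ hint y hy
  obtain ⟨hy0, hy1⟩ := hy
  set m : ℝ := min y (1 - y) with hm_def
  have hm0 : 0 < m := lt_min hy0 (by linarith)
  have hmy : m ≤ y := min_le_left _ _
  have hmy' : m ≤ 1 - y := min_le_right _ _
  set g : ℝ → ℝ := fun x => |φ x| ^ p with hg_def
  have hgnn : ∀ x, 0 ≤ g x := fun x => Real.rpow_nonneg (abs_nonneg _) p
  have hg : IntegrableOn g (Icc (0:ℝ) 1) := integrable_abs_rpow φ hφ p hp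
  have hBval : (1:ℝ) < 16 / m * (m / 8) := by
    have : 16 / m * (m / 8) = 2 := by field_simp; ring
    rw [this]; norm_num
  -- pick three points with small |φ|^p
  obtain ⟨x₁, hx₁mem, hx₁g⟩ := exists_point_le g hg hgnn hint (y - m/2) (y - 3*m/8)
    (16/m) (by linarith) (fun t ht => ⟨by linarith [ht.1], by linarith [ht.2]⟩)
    (by have : (y - 3*m/8) - (y - m/2) = m/8 := by ring
        rw [this]; exact hBval)
  obtain ⟨z, hzmem, hzg⟩ := exists_point_le g hg hgnn hint (y - m/4) (y - m/8)
    (16/m) (by linarith) (fun t ht => ⟨by linarith [ht.1], by linarith [ht.2]⟩)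
    (by have : (y - m/8) - (y - m/4) = m/8 := by ring
        rw [this]; exact hBval)
  obtain ⟨x₂, hx₂mem, hx₂g⟩ := exists_point_le g hg hgnn hint (y + m/8) (y + m/4)
    (16/m) (by linarith) (fun t ht => ⟨by linarith [ht.1], by linarith [ht.2]⟩)
    (by have : (y + m/4) - (y + m/8) = m/8 := by ring
        rw [this]; exact hBval)
  set M : ℝ := (16 / m) ^ p⁻¹ with hM_def
  have hM0 : 0 ≤ M := Real.rpow_nonneg (by positivity) _
  have key : ∀ x, g x ≤ 16 / m → |φ x| ≤ M := by
    intro x hgx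
    have h := Real.rpow_le_rpow (hgnn x) hgx (by positivity : (0:ℝ) ≤ p⁻¹)
    rwa [hg_def, Real.rpow_rpow_inv (abs_nonneg _) (ne_of_gt hp0)] at h
  have hφx₁ : |φ x₁| ≤ M := key _ hx₁g
  have hφz : |φ z| ≤ M := key _ hzg
  have hφx₂ : |φ x₂| ≤ M := key _ hx₂g
  obtain ⟨hx₁l, hx₁r⟩ := hx₁mem
  obtain ⟨hzl, hzr⟩ := hzmem
  obtain ⟨hx₂l, hx₂r⟩ := hx₂mem
  have hzmem01 : z ∈ Icc (0:ℝ) 1 := ⟨by linarith, by linarith⟩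
  have hx₁mem01 : x₁ ∈ Icc (0:ℝ) 1 := ⟨by linarith, by linarith⟩
  have hx₂mem01 : x₂ ∈ Icc (0:ℝ) 1 := ⟨by linarith, by linarith⟩
  have hymem01 : y ∈ Icc (0:ℝ) 1 := ⟨by linarith, by linarith⟩
  -- Upper bound : φ y ≤ M
  have hzy : z < y := by linarith
  have hyx₂ : y < x₂ := by linarith
  have hzx₂ : (0:ℝ) < x₂ - z := by linarith
  have hupper : φ y ≤ M := by
    have hcomb := hφ.2 hzmem01 hx₂mem01
      (div_nonneg (by linarith : (0:ℝ) ≤ x₂ - y) hzx₂.le)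
      (div_nonneg (by linarith : (0:ℝ) ≤ y - z) hzx₂.le)
      (by rw [← add_div, div_eq_one_iff_eq (ne_of_gt hzx₂)]; ring)
    have harg : ((x₂ - y)/(x₂ - z)) • z + ((y - z)/(x₂ - z)) • x₂ = y := by
      simp only [smul_eq_mul]
      field_simp [ne_of_gt hzx₂]
      ring
    rw [harg] at hcomb
    simp only [smul_eq_mul] at hcomb
    have ea : (x₂ - y)/(x₂ - z) * φ z ≤ (x₂ - y)/(x₂ - z) * M :=
      mul_le_mul_of_nonneg_left (le_of_abs_le hφz)
        (div_nonneg (by linarith) hzx₂.le)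
    have eb : (y - z)/(x₂ - z) * φ x₂ ≤ (y - z)/(x₂ - z) * M :=
      mul_le_mul_of_nonneg_left (le_of_abs_le hφx₂)
        (div_nonneg (by linarith) hzx₂.le)
    have esum : (x₂ - y)/(x₂ - z) * M + (y - z)/(x₂ - z) * M = M := by
      field_simp
      ring
    linarith
  -- Lower bound : -8M ≤ φ y
  have hx₁y : (0:ℝ) < y - x₁ := by linarith
  have hlower : -(8*M) ≤ φ y := by
    have hcomb := hφ.2 hx₁mem01 hymem01
      (div_nonneg (by linarith : (0:ℝ) ≤ y - z) hx₁y.le)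
      (div_nonneg (by linarith : (0:ℝ) ≤ z - x₁) hx₁y.le)
      (by rw [← add_div, div_eq_one_iff_eq (ne_of_gt hx₁y)]; ring)
    have harg : ((y - z)/(y - x₁)) • x₁ + ((z - x₁)/(y - x₁)) • y = z := by
      simp only [smul_eq_mul]
      field_simp [ne_of_gt hx₁y]
      ring
    rw [harg] at hcomb
    simp only [smul_eq_mul] at hcomb
    set b' : ℝ := (z - x₁)/(y - x₁) with hb'_def
    have hb'q : 1/4 ≤ b' := by
      rw [hb'_def, le_div_iff₀ hx₁y]
      linarith
    have ha1 : (y - z)/(y - x₁) ≤ 1 := by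
      rw [div_le_one hx₁y]; linarith
    have ha0 : 0 ≤ (y - z)/(y - x₁) := div_nonneg (by linarith) hx₁y.le
    have ea : (y - z)/(y - x₁) * φ x₁ ≤ M := by
      calc (y - z)/(y - x₁) * φ x₁ ≤ (y - z)/(y - x₁) * M :=
            mul_le_mul_of_nonneg_left (le_of_abs_le hφx₁) ha0
        _ ≤ 1 * M := mul_le_mul_of_nonneg_right ha1 hM0
        _ = M := one_mul M
    have hbphi : -(2*M) ≤ b' * φ y := by
      have := neg_abs_le (φ z)
      linarith
    by_cases hsign : 0 ≤ φ y
    · linarith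
    · push_neg at hsign
      have hb1 : b' * φ y ≤ (1/4) * φ y := by
        have h' : (b' - 1/4) * φ y ≤ 0 :=
          mul_nonpos_of_nonneg_of_nonpos (by linarith) hsign.le
        have h'' : (b' - 1/4) * φ y = b' * φ y - (1/4) * φ y := by ring
        linarith
      linarith
  have habs : |φ y| ≤ 8 * M := abs_le.mpr ⟨by linarith, by linarith⟩
  -- Convert M to the target bound
  have hMle : M ≤ 16 * m ^ (-(1/p)) := by
    have h1 : M = 16 ^ p⁻¹ * m ^ (-p⁻¹) := by
      rw [hM_def, div_eq_mul_inv, Real.mul_rpow (by norm_num) (by positivity),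
        Real.inv_rpow hm0.le, ← Real.rpow_neg hm0.le]
    have h2 : (16:ℝ) ^ p⁻¹ ≤ 16 := by
      calc (16:ℝ) ^ p⁻¹ ≤ 16 ^ (1:ℝ) :=
            Real.rpow_le_rpow_of_exponent_le (by norm_num) (by
              rw [inv_le_one_iff₀]; right; linarith)
        _ = 16 := Real.rpow_one 16
    have h3 : 0 < m ^ (-p⁻¹) := Real.rpow_pos_of_pos hm0 _
    rw [one_div]
    calc M = 16 ^ p⁻¹ * m ^ (-p⁻¹) := h1
      _ ≤ 16 * m ^ (-p⁻¹) := mul_le_mul_of_nonneg_right h2 h3.le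
  have hmax : m ^ (-(1/p)) = max (y ^ (-(1/p))) ((1 - y) ^ (-(1/p))) := by
    have hneg : -(1/p) ≤ 0 := neg_nonpos.2 (by positivity)
    rcases le_total y (1 - y) with h | h
    · have hle : (1 - y) ^ (-(1/p)) ≤ y ^ (-(1/p)) :=
        Real.rpow_le_rpow_of_nonpos hy0 h hneg
      rw [hm_def, min_eq_left h, max_eq_left hle]
    · have hle : y ^ (-(1/p)) ≤ (1 - y) ^ (-(1/p)) :=
        Real.rpow_le_rpow_of_nonpos (by linarith) h hneg
      rw [hm_def, min_eq_right h, max_eq_right hle]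
  calc |φ y| ≤ 8 * M := habs
    _ ≤ 8 * (16 * m ^ (-(1/p))) :=
        mul_le_mul_of_nonneg_left hMle (by norm_num)
    _ = 128 * m ^ (-(1/p)) := by ring
    _ = 128 * max (y ^ (-(1/p))) ((1 - y) ^ (-(1/p))) := by rw [hmax]
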